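/- Let d be a pseudo-metric on N ∪ C with |N| = n, let P ⊆ N be any subset of size k, let c' ∈ C be any alternative, and let c(P) ∈ C minimize SC(P,·). Then SC(c(P)) ≤ SC(c') + 2·((n−k)/k)·SC(P,c'), where SC(c) = Σ_{i∈N} d(i,c) and SC(P,c) = Σ_{i∈P} d(i,c). -/

import Mathlib

/-- For a pseudo-metric `d` on agents and alternatives, a panel `P ⊆ N`
of size `k`, any alternative `c' ∈ C`, and `cP` minimizing `SC(P,·)` over `C`:
`SC(cP) ≤ SC(c') + 2·((n−k)/k)·SC(P,c')`. -/
theorem stmt_1 {V : Type*} [DecidableEq V] (d : V → V → ℝ)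
    (hsymm : ∀ x y, d x y = d y x)
    (htri : ∀ x y z, d x z ≤ d x y + d y z)
    (hnonneg : ∀ x y, 0 ≤ d x y)
    (N C : Finset V) (n k : ℕ) (hn : N.card = n) (hk : 0 < k)
    (P : Finset V) (hPN : P ⊆ N) (hPcard : P.card = k)
    (c' : V) (hc' : c' ∈ C)
    (cP : V) (hcPC : cP ∈ C)
    (hmin : ∀ c ∈ C, ∑ i ∈ P, d i cP ≤ ∑ i ∈ P, d i c) :
    ∑ i ∈ N, d i cP ≤
      (∑ i ∈ N, d i c') + 2 * (((n : ℝ) - k) / k) * ∑ i ∈ P, d i c' := by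
  have hkn : k ≤ n := by
    rw [← hn, ← hPcard]; exact Finset.card_le_card hPN
  have hkpos : (0:ℝ) < k := by exact_mod_cast hk
  have hnk : (0:ℝ) ≤ (n:ℝ) - k := by
    have : (k:ℝ) ≤ n := by exact_mod_cast hkn
    linarith
  set S := ∑ i ∈ P, d i c' with hS
  have hSnn : 0 ≤ S := Finset.sum_nonneg fun i _ => hnonneg i c'
  have hkey : (k : ℝ) * d c' cP ≤ 2 * S := by
    have h1 : ∑ j ∈ P, d c' cP ≤ ∑ j ∈ P, (d j c' + d j cP) := by
      apply Finset.sum_le_sum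
      intro j _
      calc d c' cP ≤ d c' j + d j cP := htri _ _ _
        _ = d j c' + d j cP := by rw [hsymm]
    rw [Finset.sum_const, hPcard, nsmul_eq_mul, Finset.sum_add_distrib] at h1
    have h2 := hmin c' hc'
    linarith
  have hsplit : ∑ i ∈ N, d i cP = (∑ i ∈ N \ P, d i cP) + ∑ i ∈ P, d i cP :=
    (Finset.sum_sdiff hPN).symm
  have hsplit' : ∑ i ∈ N, d i c' = (∑ i ∈ N \ P, d i c') + S :=
    (Finset.sum_sdiff hPN).symm
  have hcardN : (N \ P).card = n - k := by
    rw [Finset.card_sdiff_of_subset hPN, hn, hPcard]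
  have h3 : ∑ i ∈ N \ P, d i cP ≤ (∑ i ∈ N \ P, d i c') + ((n : ℝ) - k) * d c' cP := by
    have h := Finset.sum_le_sum (s := N \ P) (fun i _ => htri i c' cP)
    rw [Finset.sum_add_distrib, Finset.sum_const, hcardN, nsmul_eq_mul,
      Nat.cast_sub hkn] at h
    linarith
  have h4 : ((n:ℝ) - k) * d c' cP ≤ 2 * (((n:ℝ) - k) / k) * S := by
    have hmul := mul_le_mul_of_nonneg_left hkey hnk
    have : 2 * (((n:ℝ) - k) / k) * S = (((n:ℝ) - k) * (2 * S)) / k := by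
      field_simp
    rw [this, le_div_iff₀ hkpos]
    nlinarith [hmul]
  have h5 := hmin c' hc'
  linarith [hsplit, hsplit', h3, h4, h5]
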